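/- Let $r \ge 2$ and $k \ge r$ be integers. The number of sequences $(i_j, k_j)_{j=1}^r$ of pairs of integers satisfying: $k_1,\dots,k_r \ge 1$, $k_1 + \cdots + k_r = k$, $-k_r + 1 \le i_r \le 0$, and $i_{j+1} - k_j + 1 \le i_j \le i_{j+1} + k_{j+1} - 1$ for all $1 \le j \le r-1$, is at most $e^{3k}$. -/

import Mathlib

open Real

namespace CardCompat

/-- relative offset data -/
def A {r : ℕ} (q : (Fin r → ℤ) × (Fin r → ℤ)) (j : Fin r) : ℤ :=
  if h : (j : ℕ) + 1 < r then q.1 j - q.1 ⟨(j : ℕ) + 1, h⟩ + q.2 j else q.1 j + q.2 j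

/-- encoding map -/
def phi {r : ℕ} (k : ℕ) (q : (Fin r → ℤ) × (Fin r → ℤ)) : List ℕ × List ℕ :=
  (List.ofFn fun j => (q.2 j).toNat,
   (List.ofFn fun j => (A q j).toNat) ++ [2 * k + 1 - ∑ j, (A q j).toNat])

end CardCompat

/-- The set of encodings `(i_j, k_j)_{j=1}^r` of compatible box configurations with `k`
boxes in `r` rows (Lemma `cardBk`) is finite and has cardinality at most `e^{3k}`. -/
theorem card_compatible_configs (r k : ℕ) (hr : 2 ≤ r) (hk : r ≤ k)
    (S : Set ((Fin r → ℤ) × (Fin r → ℤ)))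
    (hS : S = {q : (Fin r → ℤ) × (Fin r → ℤ) |
        (∀ j, 1 ≤ q.2 j) ∧ (∑ j, q.2 j = (k : ℤ)) ∧
        (-(q.2 ⟨r - 1, by omega⟩) + 1 ≤ q.1 ⟨r - 1, by omega⟩ ∧
          q.1 ⟨r - 1, by omega⟩ ≤ 0) ∧
        (∀ j : Fin r, ∀ hj : (j : ℕ) + 1 < r,
          q.1 ⟨(j : ℕ) + 1, hj⟩ - q.2 j + 1 ≤ q.1 j ∧
            q.1 j ≤ q.1 ⟨(j : ℕ) + 1, hj⟩ + q.2 ⟨(j : ℕ) + 1, hj⟩ - 1)}) :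
    S.Finite ∧ (S.ncard : ℝ) ≤ exp (3 * k) := by
  classical
  open CardCompat in
  -- basic facts about elements of S
  have hA_pos : ∀ q ∈ S, ∀ j : Fin r, 1 ≤ A q j := by
    intro q hq j
    rw [hS] at hq
    obtain ⟨h1, h2, h3, h4⟩ := hq
    unfold A
    by_cases h : (j : ℕ) + 1 < r
    · rw [dif_pos h]
      have := (h4 j h).1
      linarith
    · rw [dif_neg h]
      have hj : (j : ℕ) = r - 1 := by omega
      have hje : j = ⟨r - 1, by omega⟩ := Fin.ext hj
      rw [hje]
      linarith [h3.1]
  -- sum of A's is bounded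
  have hA_sum : ∀ q ∈ S, ∑ j, (A q j).toNat ≤ 2 * k := by
    intro q hq
    rw [hS] at hq
    obtain ⟨h1, h2, h3, h4⟩ := hq
    -- extended functions
    set Iv : ℕ → ℤ := fun j => if h : j < r then q.1 ⟨j, h⟩ else 0 with hIv
    set Kv : ℕ → ℤ := fun j => if h : j < r then q.2 ⟨j, h⟩ else 0 with hKv
    have hstep : ∀ j : Fin r, A q j = Iv j - Iv ((j : ℕ) + 1) + Kv j := by
      intro j
      unfold A
      by_cases h : (j : ℕ) + 1 < r
      · rw [dif_pos h]
        simp [hIv, hKv, j.isLt, h, Fin.eta]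
      · rw [dif_neg h]
        simp only [hIv, hKv, dif_neg h, dif_pos j.isLt, Fin.eta]
        ring
    have hKsum : ∑ l ∈ Finset.range r, Kv l = (k : ℤ) := by
      rw [← h2, ← Fin.sum_univ_eq_sum_range]
      exact Finset.sum_congr rfl fun j _ => by simp [hKv, j.isLt, Fin.eta]
    have hsumA : ∑ j : Fin r, A q j = Iv 0 + (k : ℤ) := by
      have : ∑ j : Fin r, A q j = ∑ l ∈ Finset.range r, (Iv l - Iv (l + 1) + Kv l) := by
        rw [← Fin.sum_univ_eq_sum_range (fun l => Iv l - Iv (l + 1) + Kv l) r]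
        exact Finset.sum_congr rfl fun j _ => hstep j
      rw [this, Finset.sum_add_distrib, Finset.sum_range_sub' Iv, hKsum]
      have hIvr : Iv r = 0 := by simp [hIv]
      rw [hIvr]
      ring
    -- downward induction bound
    have hdown : ∀ d : ℕ, ∀ j : ℕ, j + d + 1 = r →
        Iv j + ∑ l ∈ Finset.range (j + 1), Kv l ≤ (k : ℤ) := by
      intro d
      induction d with
      | zero =>
        intro j hj
        have hj' : j + 1 = r := by omega
        have hIvj : Iv j ≤ 0 := by
          have hjeq : j = r - 1 := by omega
          subst hjeq
          simp only [hIv, dif_pos (show r - 1 < r by omega)]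
          exact h3.2
        rw [hj', hKsum]
        linarith
      | succ d ih =>
        intro j hj
        have hjr : j + 1 < r := by omega
        have ih' := ih (j + 1) (by omega)
        have hIstep : Iv j ≤ Iv (j + 1) + Kv (j + 1) - 1 := by
          have h4' := (h4 ⟨j, by omega⟩ hjr).2
          simp only [hIv, hKv, dif_pos hjr, dif_pos (show j < r by omega)]
          exact h4'
        rw [Finset.sum_range_succ] at ih' ⊢
        rw [Finset.sum_range_succ] at ih'
        linarith
    have hbound : Iv 0 + Kv 0 ≤ (k : ℤ) := by
      have := hdown (r - 1) 0 (by omega)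
      simpa [Finset.sum_range_one] using this
    have hK0 : 1 ≤ Kv 0 := by
      simp only [hKv, dif_pos (show 0 < r by omega)]
      exact h1 _
    -- conclude in ℤ then ℕ
    have hposA : ∀ j : Fin r, 1 ≤ A q j := hA_pos q (by rw [hS]; exact ⟨h1, h2, h3, h4⟩)
    have hcast : (↑(∑ j : Fin r, (A q j).toNat) : ℤ) = ∑ j : Fin r, A q j := by
      rw [Nat.cast_sum]
      exact Finset.sum_congr rfl fun j _ => Int.toNat_of_nonneg (by linarith [hposA j])
    have : (↑(∑ j : Fin r, (A q j).toNat) : ℤ) ≤ 2 * (k : ℤ) := by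
      rw [hcast, hsumA]; linarith
    exact_mod_cast this
  -- the image of phi lands in blocks of compositions
  set B : Set (List ℕ × List ℕ) :=
    Set.range (fun c : Composition k × Composition (2 * k + 1) => (c.1.blocks, c.2.blocks))
    with hB
  have hBfin : B.Finite := Set.finite_range _
  have hsub : phi k '' S ⊆ B := by
    rintro p ⟨q, hq, rfl⟩
    have hq' := hq
    rw [hS] at hq'
    obtain ⟨h1, h2, h3, h4⟩ := hq'
    have hposA := hA_pos q hq
    have hsA := hA_sum q hq
    have hsum2 : ∑ j : Fin r, (q.2 j).toNat = k := by
      have : (↑(∑ j : Fin r, (q.2 j).toNat) : ℤ) = (k : ℤ) := by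
        rw [Nat.cast_sum, ← h2]
        exact Finset.sum_congr rfl fun j _ => Int.toNat_of_nonneg (by linarith [h1 j])
      exact_mod_cast this
    refine ⟨(⟨List.ofFn fun j => (q.2 j).toNat, ?_, ?_⟩,
             ⟨(List.ofFn fun j => (A q j).toNat) ++ [2 * k + 1 - ∑ j, (A q j).toNat], ?_, ?_⟩), rfl⟩
    · intro i hi
      obtain ⟨j, rfl⟩ := List.mem_ofFn.1 hi
      have := h1 j
      show 0 < (q.2 j).toNat
      omega
    · rw [List.sum_ofFn]; exact hsum2
    · intro i hi
      rw [List.mem_append] at hi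
      rcases hi with hi | hi
      · obtain ⟨j, rfl⟩ := List.mem_ofFn.1 hi
        have := hposA j
        show 0 < (A q j).toNat
        omega
      · simp only [List.mem_singleton] at hi
        subst hi
        omega
    · rw [List.sum_append, List.sum_ofFn]
      simp only [List.sum_cons, List.sum_nil]
      omega
  -- injectivity
  have hinj : Set.InjOn (phi k) S := by
    intro q hq q' hq' heq
    have hq0 := hq; have hq0' := hq'
    rw [hS] at hq0 hq0'
    obtain ⟨h1, h2, h3, h4⟩ := hq0
    obtain ⟨h1', h2', h3', h4'⟩ := hq0'
    have hfst := congrArg Prod.fst heq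
    have hsnd := congrArg Prod.snd heq
    simp only [phi] at hfst hsnd
    -- second components equal
    have h2eq : q.2 = q'.2 := by
      have := List.ofFn_injective hfst
      funext j
      have hj := congrFun this j
      have := h1 j; have := h1' j
      omega
    -- A's equal
    have hAeq : ∀ j : Fin r, A q j = A q' j := by
      have hlen : (List.ofFn fun j => (A q j).toNat).length
          = (List.ofFn fun j => (A q' j).toNat).length := by simp
      have := (List.append_inj hsnd (by simpa using hlen)).1
      intro j
      have hj := congrFun (List.ofFn_injective this) j
      have := hA_pos q hq j; have := hA_pos q' hq' j
      omega
    have h1eq : ∀ d : ℕ, ∀ j : ℕ, (hjr : j < r) → j + d + 1 = r →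
        q.1 ⟨j, hjr⟩ = q'.1 ⟨j, hjr⟩ := by
      intro d
      induction d with
      | zero =>
        intro j hjr hj
        have hAj := hAeq ⟨j, hjr⟩
        unfold A at hAj
        rw [dif_neg (show ¬((j:ℕ) + 1 < r) by omega), dif_neg (show ¬((j:ℕ) + 1 < r) by omega)] at hAj
        have := congrFun h2eq ⟨j, hjr⟩
        linarith [hAj, this.le, this.ge]
      | succ d ih =>
        intro j hjr hj
        have hjr1 : j + 1 < r := by omega
        have hih := ih (j + 1) hjr1 (by omega)
        have hAj := hAeq ⟨j, hjr⟩
        unfold A at hAj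
        rw [dif_pos (show (j:ℕ) + 1 < r from hjr1), dif_pos (show (j:ℕ) + 1 < r from hjr1)] at hAj
        have h2j := congrFun h2eq ⟨j, hjr⟩
        simp only [Fin.val_mk] at hAj
        have : q.1 ⟨j + 1, hjr1⟩ = q'.1 ⟨j + 1, hjr1⟩ := hih
        linarith [hAj, h2j.le, h2j.ge, this.le, this.ge]
    have h1eq' : q.1 = q'.1 := by
      funext j
      have := h1eq (r - 1 - (j : ℕ)) (j : ℕ) j.isLt (by omega)
      simpa [Fin.eta] using this
    exact Prod.ext h1eq' h2eq
  -- finiteness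
  have hfin : S.Finite := Set.Finite.of_finite_image (hBfin.subset hsub) hinj
  refine ⟨hfin, ?_⟩
  -- cardinality bound
  have hcard : S.ncard ≤ 2 ^ (k - 1) * 2 ^ (2 * k) := by
    have h1 : S.ncard = (phi k '' S).ncard := (Set.ncard_image_of_injOn hinj).symm
    have h2 : (phi k '' S).ncard ≤ B.ncard := Set.ncard_le_ncard hsub hBfin
    have h3 : B.ncard ≤ Nat.card (Composition k × Composition (2 * k + 1)) := by
      rw [hB, ← Set.image_univ]
      calc ((fun c : Composition k × Composition (2 * k + 1) => (c.1.blocks, c.2.blocks)) ''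
          Set.univ).ncard ≤ Set.univ.ncard := Set.ncard_image_le Set.finite_univ
        _ = Nat.card _ := Set.ncard_univ _
    have h4 : Nat.card (Composition k × Composition (2 * k + 1))
        = 2 ^ (k - 1) * 2 ^ (2 * k) := by
      rw [Nat.card_eq_fintype_card, Fintype.card_prod, composition_card, composition_card]
      have h5 : 2 * k + 1 - 1 = 2 * k := by omega
      rw [h5]
    omega
  calc (S.ncard : ℝ) ≤ ((2 ^ (k - 1) * 2 ^ (2 * k) : ℕ) : ℝ) := by exact_mod_cast hcard
    _ ≤ (2 : ℝ) ^ k * 2 ^ (2 * k) := by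
        push_cast
        exact mul_le_mul_of_nonneg_right
          (pow_le_pow_right₀ one_le_two (by omega)) (by positivity)
    _ = (2 : ℝ) ^ (3 * k) := by rw [← pow_add]; ring_nf
    _ ≤ (exp 1) ^ (3 * k) :=
        pow_le_pow_left₀ (by norm_num) (by linarith [add_one_le_exp (1 : ℝ)]) _
    _ = exp (3 * k) := by
        rw [Real.exp_one_pow]
        congr 1
        push_cast
        ring
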